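/- arXiv:2008.10982 — 9 statements merged into one kernel-verified Lean document; each statement's English description precedes it below -/
import Mathlib

section
/- For every threshold c > 0, the function x ↦ ρ_c(x)/x is concave on the open interval (0, ∞). -/
/-- Huber's loss function with threshold `c`. -/
noncomputable def huberLoss (c x : ℝ) : ℝ :=
  if |x| ≤ c then x ^ 2 / 2 else c * |x| - c ^ 2 / 2

/-- For every threshold `c > 0`, the function `x ↦ ρ_c(x)/x` is concave on `(0, ∞)`. -/
theorem huberLoss_div_concaveOn (c : ℝ) (hc : 0 < c) :
    ConcaveOn ℝ (Set.Ioi (0 : ℝ)) (fun x => huberLoss c x / x) := by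
  set f : ℝ → ℝ := fun x => huberLoss c x / x with hf
  set φ : ℝ → ℝ := fun x => if x ≤ c then 1/2 else c^2 / (2 * x^2) with hφ
  -- values of f
  have hfval₁ : ∀ x : ℝ, 0 < x → x ≤ c → f x = x / 2 := by
    intro x hx hxc
    simp only [hf, huberLoss, abs_of_pos hx, if_pos hxc]
    field_simp
  have hfval₂ : ∀ x : ℝ, 0 < x → c ≤ x → f x = c - c^2 / (2 * x) := by
    intro x hx hcx
    rcases eq_or_lt_of_le hcx with h | h
    · rw [hfval₁ x hx h.ge, ← h]; field_simp; ring
    · simp only [hf, huberLoss, abs_of_pos hx, if_neg (not_le.mpr h)]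
      field_simp
  -- derivative of the right branch
  have hright : ∀ x : ℝ, 0 < x → HasDerivAt (fun y : ℝ => c - c^2/(2*y)) (c^2/(2*x^2)) x := by
    intro x hx
    have h1 : HasDerivAt (fun y : ℝ => 2*y) 2 x := by
      simpa using (hasDerivAt_id x).const_mul 2
    have h2 : HasDerivAt (fun y : ℝ => c^2/(2*y))
        ((0 * (2*x) - c^2 * 2) / (2*x)^2) x :=
      (hasDerivAt_const x (c^2)).div h1 (by positivity)
    have h3 := h2.const_sub c
    refine h3.congr_deriv ?_
    field_simp
    ring
  -- derivative
  have hderiv : ∀ x ∈ Set.Ioi (0:ℝ), HasDerivAt f (φ x) x := by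
    intro x hx
    simp only [Set.mem_Ioi] at hx
    rcases lt_trichotomy x c with h | h | h
    · -- x < c
      have hg : HasDerivAt (fun y : ℝ => y / 2) (1/2) x := by
        simpa using (hasDerivAt_id x).div_const 2
      have heq : f =ᶠ[nhds x] (fun y : ℝ => y / 2) := by
        filter_upwards [Ioo_mem_nhds hx h] with y hy
        exact hfval₁ y hy.1 hy.2.le
      rw [hφ]; simp only [if_pos h.le]
      exact hg.congr_of_eventuallyEq heq
    · -- x = c
      subst h
      have hφx : φ x = 1/2 := by simp [hφ]
      rw [hφx]
      have hle : HasDerivWithinAt f (1/2) (Set.Iic x) x := by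
        have hg : HasDerivWithinAt (fun y : ℝ => y / 2) (1/2) (Set.Iic x) x := by
          simpa using ((hasDerivAt_id x).div_const 2).hasDerivWithinAt
        refine hg.congr_of_eventuallyEq ?_ (hfval₁ x hx le_rfl)
        filter_upwards [self_mem_nhdsWithin,
          eventually_nhdsWithin_of_eventually_nhds (eventually_gt_nhds hx)] with y hy hy'
        exact hfval₁ y hy' hy
      have hge : HasDerivWithinAt f (1/2) (Set.Ici x) x := by
        have hg : HasDerivWithinAt (fun y : ℝ => x - x^2/(2*y)) (1/2) (Set.Ici x) x := by
          have := (hright x hx).hasDerivWithinAt (s := Set.Ici x)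
          refine this.congr_deriv ?_
          field_simp
        refine hg.congr_of_eventuallyEq ?_ (hfval₂ x hx le_rfl)
        filter_upwards [self_mem_nhdsWithin] with y hy
        exact hfval₂ y (lt_of_lt_of_le hx hy) hy
      have := hle.union hge
      rwa [Set.Iic_union_Ici, hasDerivWithinAt_univ] at this
    · -- c < x
      have heq : f =ᶠ[nhds x] (fun y : ℝ => c - c^2/(2*y)) := by
        filter_upwards [Ioi_mem_nhds h] with y hy
        exact hfval₂ y (hc.trans hy) hy.le
      rw [hφ]; simp only [if_neg (not_le.mpr h)]
      exact (hright x (hc.trans h)).congr_of_eventuallyEq heq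
  -- φ is antitone on Ioi 0
  have hanti : AntitoneOn φ (Set.Ioi (0:ℝ)) := by
    intro x hx y hy hxy
    simp only [Set.mem_Ioi] at hx hy
    simp only [hφ]
    by_cases hyc : y ≤ c
    · rw [if_pos (hxy.trans hyc), if_pos hyc]
    · rw [if_neg hyc]
      push_neg at hyc
      by_cases hxc : x ≤ c
      · rw [if_pos hxc]
        rw [div_le_div_iff₀ (by positivity) (by norm_num)]
        nlinarith
      · rw [if_neg hxc]
        push_neg at hxc
        apply div_le_div_of_nonneg_left (by positivity) (by positivity)
        nlinarith
  -- conclude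
  apply AntitoneOn.concaveOn_of_deriv (convex_Ioi 0)
  · exact fun x hx => (hderiv x hx).continuousAt.continuousWithinAt
  · rw [interior_Ioi]
    exact fun x hx => (hderiv x hx).differentiableAt.differentiableWithinAt
  · rw [interior_Ioi]
    intro x hx y hy hxy
    rw [(hderiv x hx).deriv, (hderiv y hy).deriv]
    exact hanti hx hy hxy
end

section
/- For every N ≥ 1, p ≥ 1, y ∈ ℝ^N, X ∈ ℝ^{N×p}, α > 0 and c > 0, Huber's criterion L(β, σ) = Nασ + Σ_{i=1}^N ρ_c((y_i − x_iᵀβ)/σ)·σ is jointly convex on the set ℝ^p × (0, ∞), where x_iᵀ denotes the i-th row of X. -/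
lemma huberLoss_lower (c : ℝ) (x s : ℝ) (hs : |s| ≤ c) :
    s * x - s ^ 2 / 2 ≤ huberLoss c x := by
  unfold huberLoss
  split_ifs with h
  · nlinarith [sq_nonneg (x - s)]
  · push_neg at h
    have h1 : s * x ≤ |s| * |x| := by
      calc s * x ≤ |s * x| := le_abs_self _
      _ = |s| * |x| := abs_mul s x
    nlinarith [sq_abs s, abs_nonneg s, abs_nonneg x, sq_nonneg (|s| - |x|),
      mul_nonneg (sub_nonneg.2 hs) (sub_nonneg.2 h.le)]

lemma huberLoss_eq (c : ℝ) (hc : 0 < c) (x : ℝ) :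
    ∃ s, |s| ≤ c ∧ huberLoss c x = s * x - s ^ 2 / 2 := by
  unfold huberLoss
  split_ifs with h
  · exact ⟨x, h, by ring⟩
  · push_neg at h
    rcases le_or_gt 0 x with hx | hx
    · refine ⟨c, by rw [abs_of_pos hc], ?_⟩
      rw [abs_of_nonneg hx]
    · refine ⟨-c, by rw [abs_neg, abs_of_pos hc], ?_⟩
      rw [abs_of_neg hx]; ring

lemma huber_persp_key (c : ℝ) (hc : 0 < c) (t₁ t₂ σ₁ σ₂ a b : ℝ)
    (hσ₁ : 0 < σ₁) (hσ₂ : 0 < σ₂) (ha : 0 ≤ a) (hb : 0 ≤ b)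
    (hσ : 0 < a * σ₁ + b * σ₂) :
    huberLoss c ((a * t₁ + b * t₂) / (a * σ₁ + b * σ₂)) * (a * σ₁ + b * σ₂) ≤
      a * (huberLoss c (t₁ / σ₁) * σ₁) + b * (huberLoss c (t₂ / σ₂) * σ₂) := by
  obtain ⟨s, hs, heq⟩ := huberLoss_eq c hc ((a * t₁ + b * t₂) / (a * σ₁ + b * σ₂))
  have h1 : s * t₁ - s ^ 2 / 2 * σ₁ ≤ huberLoss c (t₁ / σ₁) * σ₁ := by
    have := mul_le_mul_of_nonneg_right (huberLoss_lower c (t₁ / σ₁) s hs) hσ₁.le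
    calc s * t₁ - s ^ 2 / 2 * σ₁ = (s * (t₁ / σ₁) - s ^ 2 / 2) * σ₁ := by
          field_simp
      _ ≤ huberLoss c (t₁ / σ₁) * σ₁ := this
  have h2 : s * t₂ - s ^ 2 / 2 * σ₂ ≤ huberLoss c (t₂ / σ₂) * σ₂ := by
    have := mul_le_mul_of_nonneg_right (huberLoss_lower c (t₂ / σ₂) s hs) hσ₂.le
    calc s * t₂ - s ^ 2 / 2 * σ₂ = (s * (t₂ / σ₂) - s ^ 2 / 2) * σ₂ := by
          field_simp
      _ ≤ huberLoss c (t₂ / σ₂) * σ₂ := this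
  have hLHS : huberLoss c ((a * t₁ + b * t₂) / (a * σ₁ + b * σ₂)) * (a * σ₁ + b * σ₂)
      = a * (s * t₁ - s ^ 2 / 2 * σ₁) + b * (s * t₂ - s ^ 2 / 2 * σ₂) := by
    rw [heq]; field_simp; ring
  rw [hLHS]
  have := mul_le_mul_of_nonneg_left h1 ha
  have := mul_le_mul_of_nonneg_left h2 hb
  linarith

/-- Huber's criterion `L(β, σ) = Nασ + Σᵢ ρ_c((yᵢ − xᵢᵀβ)/σ)·σ` is jointly convex
on `ℝᵖ × (0, ∞)`. -/
theorem huberCriterion_convexOn (N p : ℕ) (hN : 1 ≤ N) (hp : 1 ≤ p)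
    (y : Fin N → ℝ) (X : Matrix (Fin N) (Fin p) ℝ) (α c : ℝ) (hα : 0 < α) (hc : 0 < c) :
    ConvexOn ℝ ((Set.univ : Set (Fin p → ℝ)) ×ˢ Set.Ioi (0 : ℝ))
      (fun q : (Fin p → ℝ) × ℝ =>
        (N : ℝ) * α * q.2 +
          ∑ i, huberLoss c ((y i - ∑ j, X i j * q.1 j) / q.2) * q.2) := by
  constructor
  · exact (convex_univ).prod (convex_Ioi 0)
  · rintro ⟨β₁, σ₁⟩ ⟨-, hσ₁⟩ ⟨β₂, σ₂⟩ ⟨-, hσ₂⟩ a b ha hb hab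
    simp only [Set.mem_Ioi] at hσ₁ hσ₂
    have hσ : 0 < a * σ₁ + b * σ₂ := by
      rcases ha.lt_or_eq with ha' | ha'
      · exact add_pos_of_pos_of_nonneg (mul_pos ha' hσ₁) (mul_nonneg hb hσ₂.le)
      · have hb' : 0 < b := by rw [← ha'] at hab; linarith
        exact add_pos_of_nonneg_of_pos (mul_nonneg ha hσ₁.le) (mul_pos hb' hσ₂)
    simp only [Prod.smul_mk, Prod.mk_add_mk, smul_eq_mul, Pi.add_apply, Pi.smul_apply]
    have ht : ∀ i, y i - ∑ j, X i j * (a * β₁ j + b * β₂ j)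
        = a * (y i - ∑ j, X i j * β₁ j) + b * (y i - ∑ j, X i j * β₂ j) := by
      intro i
      have : ∑ j, X i j * (a * β₁ j + b * β₂ j)
          = a * ∑ j, X i j * β₁ j + b * ∑ j, X i j * β₂ j := by
        rw [Finset.mul_sum, Finset.mul_sum, ← Finset.sum_add_distrib]
        exact Finset.sum_congr rfl fun j _ => by ring
      rw [this]; linear_combination (y i) * hab.symm
    have hsum : ∑ i, huberLoss c ((y i - ∑ j, X i j * (a * β₁ j + b * β₂ j))
          / (a * σ₁ + b * σ₂)) * (a * σ₁ + b * σ₂)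
        ≤ ∑ i, (a * (huberLoss c ((y i - ∑ j, X i j * β₁ j) / σ₁) * σ₁)
            + b * (huberLoss c ((y i - ∑ j, X i j * β₂ j) / σ₂) * σ₂)) := by
      refine Finset.sum_le_sum fun i _ => ?_
      rw [ht i]
      exact huber_persp_key c hc _ _ σ₁ σ₂ a b hσ₁ hσ₂ ha hb hσ
    rw [Finset.sum_add_distrib, ← Finset.mul_sum, ← Finset.mul_sum] at hsum
    nlinarith [hsum]
end

section
/- For every threshold c > 0, every N ≥ 1 and every residual vector r ∈ ℝ^N, the maximum-likelihood scale criterion σ ↦ N·ln(σ) + Σ_{i=1}^N ρ_c(r_i/σ) is NOT a convex function on (0, ∞). -/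
/-- For every `c > 0`, `N ≥ 1` and residual vector `r`, the maximum-likelihood scale
criterion `σ ↦ N·ln σ + Σᵢ ρ_c(rᵢ/σ)` is not convex on `(0, ∞)`. -/
theorem mlScaleCriterion_not_convexOn (c : ℝ) (hc : 0 < c) (N : ℕ) (hN : 1 ≤ N)
    (r : Fin N → ℝ) :
    ¬ ConvexOn ℝ (Set.Ioi (0 : ℝ))
        (fun σ : ℝ => (N : ℝ) * Real.log σ + ∑ i, huberLoss c (r i / σ)) := by
  intro h
  set F : ℝ → ℝ := fun σ : ℝ => (N : ℝ) * Real.log σ + ∑ i, huberLoss c (r i / σ) with hF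
  have hN' : (1 : ℝ) ≤ (N : ℝ) := by exact_mod_cast hN
  set S : ℝ := ∑ i, (r i) ^ 2 with hSdef
  have hS0 : 0 ≤ S := Finset.sum_nonneg fun i _ => sq_nonneg _
  have hsum_abs : 0 ≤ ∑ i, |r i| := Finset.sum_nonneg fun i _ => abs_nonneg _
  set a : ℝ := 1 + 2 * Real.sqrt S + (∑ i, |r i|) / c with hadef
  have hsqrt0 : 0 ≤ Real.sqrt S := Real.sqrt_nonneg _
  have hdiv0 : 0 ≤ (∑ i, |r i|) / c := div_nonneg hsum_abs hc.le
  have ha1 : 1 ≤ a := by rw [hadef]; linarith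
  have ha0 : 0 < a := lt_of_lt_of_le one_pos ha1
  have ha2 : 4 * S ≤ a ^ 2 := by
    have h1 : 2 * Real.sqrt S ≤ a := by rw [hadef]; linarith
    have h2 : Real.sqrt S ^ 2 = S := Real.sq_sqrt hS0
    nlinarith [sq_nonneg (Real.sqrt S)]
  -- For σ ≥ a, all residuals are in the quadratic branch.
  have hform : ∀ σ : ℝ, a ≤ σ → F σ = (N : ℝ) * Real.log σ + S / (2 * σ ^ 2) := by
    intro σ hσ
    have hσ0 : 0 < σ := lt_of_lt_of_le ha0 hσ
    have hterm : ∀ i : Fin N, huberLoss c (r i / σ) = (r i) ^ 2 / (2 * σ ^ 2) := by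
      intro i
      have h1 : |r i| ≤ ∑ j, |r j| :=
        Finset.single_le_sum (fun j _ => abs_nonneg (r j)) (Finset.mem_univ i)
      have h2 : (∑ j, |r j|) ≤ c * a := by
        have : (∑ j, |r j|) = c * ((∑ j, |r j|) / c) := by field_simp
        rw [this]
        have : (∑ j, |r j|) / c ≤ a := by rw [hadef]; linarith
        nlinarith
      have hri : |r i| ≤ c * σ := by nlinarith
      have habs : |r i / σ| ≤ c := by
        rw [abs_div, abs_of_pos hσ0, div_le_iff₀ hσ0]
        linarith
      rw [huberLoss, if_pos habs, div_pow]
      ring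
    rw [hF]
    simp only
    rw [Finset.sum_congr rfl fun i _ => hterm i, hSdef, Finset.sum_div]
  have hupper : ∀ σ : ℝ, a ≤ σ → F σ ≤ (N : ℝ) * Real.log σ + 1 / 8 := by
    intro σ hσ
    have hσ0 : 0 < σ := lt_of_lt_of_le ha0 hσ
    rw [hform σ hσ]
    have hσ2 : a ^ 2 ≤ σ ^ 2 := by nlinarith
    have : S / (2 * σ ^ 2) ≤ 1 / 8 := by
      rw [div_le_iff₀ (by positivity : (0:ℝ) < 2 * σ ^ 2)]
      nlinarith
    linarith
  have hlower : ∀ σ : ℝ, a ≤ σ → (N : ℝ) * Real.log σ ≤ F σ := by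
    intro σ hσ
    have hσ0 : 0 < σ := lt_of_lt_of_le ha0 hσ
    rw [hform σ hσ]
    have : 0 ≤ S / (2 * σ ^ 2) := by positivity
    linarith
  clear_value F S a
  clear hF hadef hSdef
  -- Points: a, a·e, a·e⁸
  set e1 : ℝ := Real.exp 1 with he1def
  set t : ℝ := Real.exp 8 with htdef
  have he1_lb : 2 ≤ e1 := by
    have := Real.add_one_le_exp (1 : ℝ)
    rw [he1def]; linarith
  have he1_ub : e1 ≤ 3 := by
    have := Real.exp_one_lt_d9
    rw [he1def]; linarith
  have ht_lb : 256 ≤ t := by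
    have h8 : Real.exp 8 = Real.exp 1 ^ (8 : ℕ) := by
      rw [← Real.exp_nat_mul]; norm_num
    have : (2 : ℝ) ^ (8 : ℕ) ≤ Real.exp 1 ^ (8 : ℕ) :=
      pow_le_pow_left₀ (by norm_num) he1_lb 8
    rw [htdef, h8]
    norm_num at this ⊢
    linarith
  have he1t : e1 < t := by linarith
  clear_value e1 t
  have ht1 : (1 : ℝ) < t := by linarith
  have htne : t - 1 ≠ 0 := sub_ne_zero.mpr (ne_of_gt ht1)
  set μ : ℝ := (e1 - 1) / (t - 1) with hμdef
  set lam : ℝ := (t - e1) / (t - 1) with hlamdef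
  have hμ0 : 0 ≤ μ := by
    apply div_nonneg <;> linarith
  have hlam0 : 0 ≤ lam := by
    apply div_nonneg <;> linarith
  have hsum : lam + μ = 1 := by
    rw [hlamdef, hμdef, ← add_div, div_eq_one_iff_eq htne]; ring
  have hμle : μ ≤ 2 / 255 := by
    rw [hμdef]
    apply div_le_div₀ (by norm_num) (by linarith) (by norm_num) (by linarith)
  have hcomb : lam * a + μ * (a * t) = a * e1 := by
    rw [hlamdef, hμdef]
    field_simp
    ring
  clear_value lam μ
  have hmem1 : a ∈ Set.Ioi (0 : ℝ) := ha0
  have hmem2 : a * t ∈ Set.Ioi (0 : ℝ) := by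
    have : 0 < t := by linarith
    exact mul_pos ha0 this
  have hcx := h.2 hmem1 hmem2 hlam0 hμ0 hsum
  simp only [smul_eq_mul] at hcx
  rw [hcomb] at hcx
  -- hcx : F (a * e1) ≤ lam * F a + μ * F (a * t)
  have hloga : Real.log (a * e1) = Real.log a + 1 := by
    rw [Real.log_mul (ne_of_gt ha0) (by rw [he1def]; positivity), he1def, Real.log_exp]
  have hlogat : Real.log (a * t) = Real.log a + 8 := by
    rw [Real.log_mul (ne_of_gt ha0) (by rw [htdef]; positivity), htdef, Real.log_exp]
  have hae1 : a ≤ a * e1 := le_mul_of_one_le_right ha0.le (by linarith)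
  have haat : a ≤ a * t := le_mul_of_one_le_right ha0.le (by linarith)
  have hfb : (N : ℝ) * Real.log a + (N : ℝ) ≤ F (a * e1) := by
    have := hlower (a * e1) hae1
    rw [hloga] at this
    linarith [this]
  have hfa : F a ≤ (N : ℝ) * Real.log a + 1 / 8 := hupper a le_rfl
  have hfat : F (a * t) ≤ (N : ℝ) * Real.log a + 8 * (N : ℝ) + 1 / 8 := by
    have := hupper (a * t) haat
    rw [hlogat] at this
    linarith [this]
  have h1 : lam * F a ≤ lam * ((N : ℝ) * Real.log a + 1 / 8) :=
    mul_le_mul_of_nonneg_left hfa hlam0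
  have h2 : μ * F (a * t) ≤ μ * ((N : ℝ) * Real.log a + 8 * (N : ℝ) + 1 / 8) :=
    mul_le_mul_of_nonneg_left hfat hμ0
  have h3 : lam * ((N : ℝ) * Real.log a + 1 / 8)
      + μ * ((N : ℝ) * Real.log a + 8 * (N : ℝ) + 1 / 8)
      = (lam + μ) * ((N : ℝ) * Real.log a) + (lam + μ) * (1 / 8) + 8 * (N : ℝ) * μ := by
    ring
  rw [hsum] at h3
  have key : (N : ℝ) ≤ 1 / 8 + 8 * (N : ℝ) * μ := by
    linarith [hcx, hfb, h1, h2, h3]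
  have hprod : 8 * (N : ℝ) * μ ≤ 8 * (N : ℝ) * (2 / 255) := by
    apply mul_le_mul_of_nonneg_left hμle
    positivity
  linarith [key, hprod, hN']
end

section
/- Fix β ∈ ℝ^p, data y ∈ ℝ^N, X ∈ ℝ^{N×p}, α > 0 and c > 0, and let r_i = y_i − x_iᵀβ. Then σ ↦ L(β, σ) is differentiable on (0, ∞) and its derivative at every σ > 0 equals Nα − Σ_{i=1}^N χ_c(r_i/σ). -/
/-- Huber's score function with threshold `c`. -/
noncomputable def huberScore (c x : ℝ) : ℝ :=
  if |x| ≤ c then x else c * Real.sign x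

/-- `χ_c(x) = ψ_c(x)·x − ρ_c(x)`. -/
noncomputable def huberChi (c x : ℝ) : ℝ := huberScore c x * x - huberLoss c x

lemma huberLoss_of_le {c t : ℝ} (h : |t| ≤ c) : huberLoss c t = t ^ 2 / 2 := by
  simp [huberLoss, h]

lemma huberLoss_of_ge {c t : ℝ} (h : c ≤ |t|) : huberLoss c t = c * |t| - c ^ 2 / 2 := by
  by_cases h' : |t| ≤ c
  · have he : |t| = c := le_antisymm h' h
    rw [huberLoss, if_pos h', ← sq_abs, he]; ring
  · rw [huberLoss, if_neg h']

lemma hasDerivAt_huberLoss {c : ℝ} (hc : 0 < c) (x : ℝ) :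
    HasDerivAt (huberLoss c) (huberScore c x) x := by
  rcases lt_trichotomy (|x|) c with h | h | h
  · -- interior of quadratic region
    have hev : huberLoss c =ᶠ[nhds x] (fun t => t ^ 2 / 2) := by
      have hmem : {t : ℝ | |t| < c} ∈ nhds x :=
        (isOpen_lt (by continuity) continuous_const).mem_nhds h
      filter_upwards [hmem] with t ht
      exact huberLoss_of_le (le_of_lt ht)
    have hd : HasDerivAt (fun t : ℝ => t ^ 2 / 2) x x := by
      simpa using ((hasDerivAt_pow 2 x).div_const 2)
    have hres : HasDerivAt (huberLoss c) x x := hd.congr_of_eventuallyEq hev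
    simpa [huberScore, le_of_lt h] using hres
  · -- boundary
    rcases (abs_eq hc.le).mp h with hxc | hxc
    · rw [hxc]
      have h1 : HasDerivWithinAt (huberLoss c) c (Set.Icc (-c) c) c := by
        have hd : HasDerivAt (fun t : ℝ => t ^ 2 / 2) c c := by
          simpa using ((hasDerivAt_pow 2 c).div_const 2)
        refine hd.hasDerivWithinAt.congr (fun t ht => huberLoss_of_le (abs_le.mpr ⟨ht.1, ht.2⟩)) ?_
        exact huberLoss_of_le (by rw [abs_of_pos hc])
      have h2 : HasDerivWithinAt (huberLoss c) c (Set.Ici c) c := by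
        have hd : HasDerivAt (fun t : ℝ => c * t - c ^ 2 / 2) c c := by
          simpa using ((hasDerivAt_id c).const_mul c).sub_const (c ^ 2 / 2)
        refine hd.hasDerivWithinAt.congr (fun t ht => ?_) ?_
        · simp only [Set.mem_Ici] at ht
          have habs : |t| = t := abs_of_nonneg (hc.le.trans ht)
          rw [huberLoss_of_ge (show c ≤ |t| by rw [habs]; exact ht), habs]
        · rw [huberLoss_of_ge (le_of_eq (abs_of_pos hc).symm), abs_of_pos hc]
      have hu := h1.union h2
      have hset : Set.Icc (-c) c ∪ Set.Ici c = Set.Ici (-c) := by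
        ext t
        simp only [Set.mem_union, Set.mem_Icc, Set.mem_Ici]
        constructor
        · rintro (⟨ha, _⟩ | ha)
          · exact ha
          · linarith
        · intro ht
          by_cases h2 : t ≤ c
          · exact Or.inl ⟨ht, h2⟩
          · exact Or.inr (by linarith)
      rw [hset] at hu
      have hda := hu.hasDerivAt (Ici_mem_nhds (by linarith))
      have hs : huberScore c c = c := by simp [huberScore, abs_of_pos hc]
      rw [hs]; exact hda
    · rw [hxc]
      have h1 : HasDerivWithinAt (huberLoss c) (-c) (Set.Icc (-c) c) (-c) := by
        have hd : HasDerivAt (fun t : ℝ => t ^ 2 / 2) (-c) (-c) := by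
          have h' := (hasDerivAt_pow 2 (-c)).div_const 2
          refine h'.congr_deriv ?_
          push_cast; ring
        refine hd.hasDerivWithinAt.congr (fun t ht => huberLoss_of_le (abs_le.mpr ⟨ht.1, ht.2⟩)) ?_
        exact huberLoss_of_le (by rw [abs_neg, abs_of_pos hc])
      have h2 : HasDerivWithinAt (huberLoss c) (-c) (Set.Iic (-c)) (-c) := by
        have hd : HasDerivAt (fun t : ℝ => c * (-t) - c ^ 2 / 2) (-c) (-c) := by
          have h' := (((hasDerivAt_id (-c)).neg).const_mul c).sub_const (c ^ 2 / 2)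
          refine h'.congr_deriv ?_
          ring
        refine hd.hasDerivWithinAt.congr (fun t ht => ?_) ?_
        · simp only [Set.mem_Iic] at ht
          have habs : |t| = -t := abs_of_nonpos (by linarith)
          rw [huberLoss_of_ge (by rw [habs]; linarith), habs]
        · rw [huberLoss_of_ge (by rw [abs_neg, abs_of_pos hc]), abs_neg, abs_of_pos hc]; ring_nf
      have hu := h1.union h2
      have hset : Set.Icc (-c) c ∪ Set.Iic (-c) = Set.Iic c := by
        ext t
        simp only [Set.mem_union, Set.mem_Icc, Set.mem_Iic]
        constructor
        · rintro (⟨_, ha⟩ | ha)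
          · exact ha
          · linarith
        · intro ht
          by_cases h2 : -c ≤ t
          · exact Or.inl ⟨h2, ht⟩
          · exact Or.inr (by linarith)
      rw [hset] at hu
      have hda := hu.hasDerivAt (Iic_mem_nhds (by linarith))
      have hs : huberScore c (-c) = -c := by simp [huberScore, abs_neg, abs_of_pos hc]
      rw [hs]; exact hda
  · -- outside
    have hx0 : x ≠ 0 := by intro h0; rw [h0] at h; simp at h; linarith
    have hns : ¬ |x| ≤ c := not_le.mpr h
    rcases hx0.lt_or_gt with hneg | hpos
    · have hev : huberLoss c =ᶠ[nhds x] (fun t => c * (-t) - c ^ 2 / 2) := by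
        have hmem : Set.Iio (-c) ∈ nhds x := by
          apply Iio_mem_nhds; rw [abs_of_neg hneg] at h; linarith
        filter_upwards [hmem] with t ht
        simp only [Set.mem_Iio] at ht
        have habs : |t| = -t := abs_of_nonpos (by linarith)
        rw [huberLoss_of_ge (by rw [habs]; linarith), habs]
      have hd : HasDerivAt (fun t : ℝ => c * (-t) - c ^ 2 / 2) (-c) x := by
        have h' := (((hasDerivAt_id x).neg).const_mul c).sub_const (c ^ 2 / 2)
        refine h'.congr_deriv ?_
        ring
      have hres : HasDerivAt (huberLoss c) (-c) x := hd.congr_of_eventuallyEq hev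
      have hs : huberScore c x = -c := by
        rw [huberScore, if_neg hns, Real.sign_of_neg hneg]; ring
      rw [hs]; exact hres
    · have hev : huberLoss c =ᶠ[nhds x] (fun t => c * t - c ^ 2 / 2) := by
        have hmem : Set.Ioi c ∈ nhds x := by
          apply Ioi_mem_nhds; rw [abs_of_pos hpos] at h; linarith
        filter_upwards [hmem] with t ht
        simp only [Set.mem_Ioi] at ht
        have habs : |t| = t := abs_of_pos (hc.trans ht)
        rw [huberLoss_of_ge (by rw [habs]; linarith), habs]
      have hd : HasDerivAt (fun t : ℝ => c * t - c ^ 2 / 2) c x := by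
        simpa using ((hasDerivAt_id x).const_mul c).sub_const (c ^ 2 / 2)
      have hres : HasDerivAt (huberLoss c) c x := hd.congr_of_eventuallyEq hev
      have hs : huberScore c x = c := by
        rw [huberScore, if_neg hns, Real.sign_of_pos hpos]; ring
      rw [hs]; exact hres

/-- For fixed `β`, the map `σ ↦ L(β, σ)` is differentiable on `(0, ∞)` and its
derivative at every `σ > 0` equals `Nα − Σᵢ χ_c(rᵢ/σ)` where `rᵢ = yᵢ − xᵢᵀβ`. -/
theorem huberCriterion_hasDerivAt_scale (N p : ℕ) (y : Fin N → ℝ)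
    (X : Matrix (Fin N) (Fin p) ℝ) (β : Fin p → ℝ) (α c : ℝ) (hα : 0 < α) (hc : 0 < c) :
    ∀ σ : ℝ, 0 < σ →
      HasDerivAt
        (fun s : ℝ =>
          (N : ℝ) * α * s + ∑ i, huberLoss c ((y i - ∑ j, X i j * β j) / s) * s)
        ((N : ℝ) * α - ∑ i, huberChi c ((y i - ∑ j, X i j * β j) / σ)) σ := by
  intro σ hσ
  set r : Fin N → ℝ := fun i => y i - ∑ j, X i j * β j with hr
  have hlin : HasDerivAt (fun s : ℝ => (N : ℝ) * α * s) ((N : ℝ) * α) σ := by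
    simpa using (hasDerivAt_id σ).const_mul ((N : ℝ) * α)
  have hterm : ∀ i : Fin N, HasDerivAt (fun s : ℝ => huberLoss c (r i / s) * s)
      (-(huberChi c (r i / σ))) σ := by
    intro i
    have h1 : HasDerivAt (fun s : ℝ => r i / s) (-(r i / σ ^ 2)) σ := by
      have := (hasDerivAt_inv hσ.ne').const_mul (r i)
      simpa [div_eq_mul_inv, neg_div, mul_div_assoc] using this
    have h2 := (hasDerivAt_huberLoss hc (r i / σ)).comp σ h1
    have h3 := h2.mul (hasDerivAt_id σ)
    refine h3.congr_deriv ?_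
    simp only [huberChi, id_eq, mul_one, Function.comp_apply]
    field_simp
    ring
  have hsum : HasDerivAt (fun s : ℝ => ∑ i, huberLoss c (r i / s) * s)
      (∑ i, -(huberChi c (r i / σ))) σ := HasDerivAt.fun_sum (fun i _ => hterm i)
  have := hlin.fun_add hsum
  simpa [hr, Finset.sum_neg_distrib, sub_eq_add_neg] using this
end

section
/- Fix c > 0, α > 0, N ≥ 1 and a residual vector r ∈ ℝ^N. The scale-only Huber criterion σ ↦ Nασ + Σ_{i=1}^N ρ_c(r_i/σ)·σ is convex on (0, ∞), and a point σ̂ > 0 is a global minimizer of this function if and only if (1/N)·Σ_{i=1}^N χ_c(r_i/σ̂) = α. -/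
open Topology Filter

lemma huberChi_eq_min (c : ℝ) (hc : 0 < c) (x : ℝ) : huberChi c x = min (x ^ 2) (c ^ 2) / 2 := by
  unfold huberChi huberScore huberLoss
  by_cases h : |x| ≤ c
  · have hx2 : x ^ 2 ≤ c ^ 2 := by
      have := abs_nonneg x
      nlinarith [sq_abs x]
    rw [if_pos h, if_pos h, min_eq_left hx2]; ring
  · push_neg at h
    have hx2 : c ^ 2 ≤ x ^ 2 := by
      have := abs_nonneg x
      nlinarith [sq_abs x]
    have hxne : x ≠ 0 := by
      intro h0; rw [h0, abs_zero] at h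
      have := abs_nonneg x; nlinarith
    have hsx : Real.sign x * x = |x| := by
      rcases hxne.lt_or_gt with hneg | hpos
      · rw [Real.sign_of_neg hneg, abs_of_neg hneg]; ring
      · rw [Real.sign_of_pos hpos, abs_of_pos hpos]; ring
    rw [if_neg (not_le.2 h), if_neg (not_le.2 h), min_eq_right hx2]
    rw [mul_assoc, hsx]; ring

lemma huberTerm_hasDerivAt (c : ℝ) (hc : 0 < c) (r : ℝ) {σ : ℝ} (hσ : 0 < σ) :
    HasDerivAt (fun s : ℝ => huberLoss c (r / s) * s) (-huberChi c (r / σ)) σ := by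
  rcases eq_or_ne r 0 with rfl | hr
  · have hchi : huberChi c (0 / σ) = 0 := by
      rw [zero_div, huberChi_eq_min c hc, min_eq_left (by nlinarith : (0:ℝ)^2 ≤ c^2)]
      norm_num
    have heq : (fun s : ℝ => huberLoss c (0 / s) * s) = fun _ : ℝ => (0:ℝ) := by
      funext s; simp [huberLoss, zero_div, hc.le, abs_zero]
    rw [hchi, neg_zero, heq]
    exact hasDerivAt_const σ 0
  · have ha : 0 < |r| := abs_pos.2 hr
    set t : ℝ := |r| / c with ht
    have htpos : 0 < t := by positivity
    -- formula on Ioc 0 t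
    have hlin : ∀ s ∈ Set.Ioc (0:ℝ) t, huberLoss c (r / s) * s = c * |r| - c ^ 2 * s / 2 := by
      rintro s ⟨hs0, hst⟩
      have habs : |r / s| = |r| / s := by rw [abs_div, abs_of_pos hs0]
      have hge : c * s ≤ |r| := by
        rw [ht, le_div_iff₀ hc] at hst; linarith [hst]
      unfold huberLoss
      by_cases h : |r / s| ≤ c
      · rw [if_pos h]
        have : |r| ≤ c * s := by
          rw [habs, div_le_iff₀ hs0] at h; linarith
        have heq : |r| = c * s := le_antisymm this hge
        have : r ^ 2 = (c * s) ^ 2 := by rw [← sq_abs, heq]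
        field_simp
        nlinarith
      · rw [if_neg h, habs]
        field_simp
    -- formula on Ici t
    have hinv : ∀ s ∈ Set.Ici t, huberLoss c (r / s) * s = r ^ 2 / (2 * s) := by
      intro s hst
      have hs0 : 0 < s := lt_of_lt_of_le htpos hst
      have habs : |r / s| ≤ c := by
        rw [abs_div, abs_of_pos hs0, div_le_iff₀ hs0]
        rw [Set.mem_Ici, ht, div_le_iff₀ hc] at hst
        linarith
      unfold huberLoss
      rw [if_pos habs, div_pow]
      field_simp
    -- derivative candidates
    have hlin' : ∀ s : ℝ, HasDerivAt (fun s : ℝ => c * |r| - c ^ 2 * s / 2) (-(c ^ 2 / 2)) s := by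
      intro s
      simpa using ((hasDerivAt_id s).const_mul (c^2)).div_const 2 |>.const_sub (c * |r|)
    have hinv' : ∀ s : ℝ, s ≠ 0 → HasDerivAt (fun u : ℝ => r ^ 2 / (2 * u))
        (-(r ^ 2 / (2 * s ^ 2))) s := by
      intro s hs
      have h1 : HasDerivAt (fun u : ℝ => (r ^ 2 / 2) * u⁻¹) ((r ^ 2 / 2) * (-(s ^ 2)⁻¹)) s :=
        (hasDerivAt_inv hs).const_mul _
      have e1 : (fun u : ℝ => r ^ 2 / (2 * u)) = fun u : ℝ => (r ^ 2 / 2) * u⁻¹ := by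
        funext u; ring
      have e2 : (r ^ 2 / 2) * (-(s ^ 2)⁻¹) = -(r ^ 2 / (2 * s ^ 2)) := by ring
      rw [e1, ← e2]; exact h1
    have hchi_lin : ∀ s : ℝ, 0 < s → s ≤ t → huberChi c (r / s) = c ^ 2 / 2 := by
      intro s hs0 hst
      have h1 : c * s ≤ |r| := by
        rw [ht, le_div_iff₀ hc] at hst; linarith
      have h2 : c ^ 2 ≤ (r / s) ^ 2 := by
        rw [div_pow, le_div_iff₀ (by positivity)]
        have h3 := mul_le_mul h1 h1 (by positivity) (abs_nonneg r)
        nlinarith [sq_abs r]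
      rw [huberChi_eq_min c hc, min_eq_right h2]
    have hchi_inv : ∀ s : ℝ, t ≤ s → huberChi c (r / s) = r ^ 2 / (2 * s ^ 2) := by
      intro s hst
      have hs0 : 0 < s := lt_of_lt_of_le htpos hst
      have h1 : |r| ≤ c * s := by
        rw [ht, div_le_iff₀ hc] at hst; linarith
      have h2 : (r / s) ^ 2 ≤ c ^ 2 := by
        rw [div_pow, div_le_iff₀ (by positivity)]
        have h3 := mul_le_mul h1 h1 (abs_nonneg r) (by positivity)
        nlinarith [sq_abs r]
      rw [huberChi_eq_min c hc, min_eq_left h2, div_pow]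
      field_simp
    rcases lt_trichotomy σ t with hlt | heq | hgt
    · have hev : ∀ᶠ s in 𝓝 σ, huberLoss c (r / s) * s = c * |r| - c ^ 2 * s / 2 := by
        filter_upwards [Ioo_mem_nhds hσ hlt] with s hs
        exact hlin s ⟨hs.1, hs.2.le⟩
      have := (hlin' σ).congr_of_eventuallyEq hev
      rwa [hchi_lin σ hσ hlt.le]
    · subst heq
      have hW1 : HasDerivWithinAt (fun s : ℝ => huberLoss c (r / s) * s) (-(c ^ 2 / 2))
          (Set.Ioc 0 t) t :=
        ((hlin' t).hasDerivWithinAt).congr (fun s hs => hlin s hs)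
          (hlin t ⟨htpos, le_rfl⟩)
      have hd2 : r ^ 2 / (2 * t ^ 2) = c ^ 2 / 2 := by
        have h3 : t ^ 2 = r ^ 2 / c ^ 2 := by
          rw [ht, div_pow, sq_abs]
        rw [h3]
        have hr2 : r ^ 2 ≠ 0 := by positivity
        field_simp
      have hW2 : HasDerivWithinAt (fun s : ℝ => huberLoss c (r / s) * s) (-(c ^ 2 / 2))
          (Set.Ici t) t := by
        rw [← hd2]
        exact ((hinv' t (ne_of_gt htpos)).hasDerivWithinAt).congr
          (fun s hs => hinv s hs) (hinv t Set.self_mem_Ici)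
      have hU := hW1.union hW2
      rw [Set.Ioc_union_Ici_eq_Ioi htpos] at hU
      have hDA := hU.hasDerivAt (Ioi_mem_nhds htpos)
      rwa [hchi_lin t htpos le_rfl]
    · have hev : ∀ᶠ s in 𝓝 σ, huberLoss c (r / s) * s = r ^ 2 / (2 * s) := by
        filter_upwards [Ioi_mem_nhds hgt] with s hs
        exact hinv s (Set.mem_Ici.2 (le_of_lt (Set.mem_Ioi.1 hs)))
      have := (hinv' σ (ne_of_gt hσ)).congr_of_eventuallyEq hev
      rwa [hchi_inv σ hgt.le]

lemma huberChi_div_antitone {c : ℝ} (hc : 0 < c) (r : ℝ) {s1 s2 : ℝ} (h1 : 0 < s1)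
    (h12 : s1 ≤ s2) : huberChi c (r / s2) ≤ huberChi c (r / s1) := by
  rw [huberChi_eq_min c hc, huberChi_eq_min c hc]
  have h2 : 0 < s2 := lt_of_lt_of_le h1 h12
  have hsq : (r / s2) ^ 2 ≤ (r / s1) ^ 2 := by
    rw [div_pow, div_pow]
    have hp : (0:ℝ) < s1 ^ 2 := by positivity
    exact div_le_div_of_nonneg_left (by positivity) hp (pow_le_pow_left₀ h1.le h12 2)
  have := min_le_min hsq (le_refl (c ^ 2))
  linarith

/-- The scale-only Huber criterion `σ ↦ Nασ + Σᵢ ρ_c(rᵢ/σ)·σ` is convex on `(0, ∞)`,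
and `shat > 0` is a global minimizer iff `(1/N)·Σᵢ χ_c(rᵢ/shat) = α`. -/
theorem huberScaleCriterion_convex_and_minimizer_iff (c α : ℝ) (hc : 0 < c) (hα : 0 < α)
    (N : ℕ) (hN : 1 ≤ N) (r : Fin N → ℝ) :
    ConvexOn ℝ (Set.Ioi (0 : ℝ))
      (fun σ : ℝ => (N : ℝ) * α * σ + ∑ i, huberLoss c (r i / σ) * σ) ∧
    ∀ shat : ℝ, 0 < shat →
      (IsMinOn (fun σ : ℝ => (N : ℝ) * α * σ + ∑ i, huberLoss c (r i / σ) * σ)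
          (Set.Ioi (0 : ℝ)) shat ↔
        (1 / (N : ℝ)) * ∑ i, huberChi c (r i / shat) = α) := by
  set F : ℝ → ℝ := fun σ : ℝ => (N : ℝ) * α * σ + ∑ i, huberLoss c (r i / σ) * σ with hF_def
  set D : ℝ → ℝ := fun σ : ℝ => (N : ℝ) * α - ∑ i, huberChi c (r i / σ) with hD_def
  have hNpos : (0 : ℝ) < (N : ℝ) := by exact_mod_cast Nat.lt_of_lt_of_le Nat.zero_lt_one hN
  have hF : ∀ σ : ℝ, 0 < σ → HasDerivAt F (D σ) σ := by
    intro σ hσ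
    have h1 : HasDerivAt (fun s : ℝ => (N : ℝ) * α * s) ((N : ℝ) * α) σ := by
      simpa using (hasDerivAt_id σ).const_mul ((N : ℝ) * α)
    have h2 : HasDerivAt (fun s : ℝ => ∑ i, huberLoss c (r i / s) * s)
        (∑ i, -huberChi c (r i / σ)) σ :=
      HasDerivAt.fun_sum fun i _ => huberTerm_hasDerivAt c hc (r i) hσ
    have := h1.fun_add h2
    rw [Finset.sum_neg_distrib] at this
    simpa [hD_def, sub_eq_add_neg] using this
  have hderiv : ∀ σ : ℝ, 0 < σ → deriv F σ = D σ := fun σ hσ => (hF σ hσ).deriv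
  have hDmono : ∀ x y : ℝ, 0 < x → x ≤ y → D x ≤ D y := by
    intro x y hx hxy
    have : ∑ i, huberChi c (r i / y) ≤ ∑ i, huberChi c (r i / x) :=
      Finset.sum_le_sum fun i _ => huberChi_div_antitone hc (r i) hx hxy
    simp only [hD_def]
    linarith
  have hcont : ∀ s : Set ℝ, s ⊆ Set.Ioi 0 → ContinuousOn F s := by
    intro s hs x hx
    exact ((hF x (hs hx)).continuousAt).continuousWithinAt
  constructor
  · apply MonotoneOn.convexOn_of_deriv (convex_Ioi 0) (hcont _ le_rfl)
    · rw [interior_Ioi]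
      exact fun x hx => ((hF x hx).differentiableAt).differentiableWithinAt
    · rw [interior_Ioi]
      intro x hx y hy hxy
      rw [hderiv x hx, hderiv y hy]
      exact hDmono x y hx hxy
  · intro shat hshat
    constructor
    · intro hmin
      have hloc : IsLocalMin F shat := hmin.isLocalMin (Ioi_mem_nhds hshat)
      have h0 : D shat = 0 := hloc.hasDerivAt_eq_zero (hF shat hshat)
      simp only [hD_def] at h0
      field_simp
      linarith
    · intro heq
      have hsum : ∑ i, huberChi c (r i / shat) = (N : ℝ) * α := by
        field_simp at heq
        linarith
      have h0 : D shat = 0 := by simp only [hD_def]; linarith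
      rw [isMinOn_iff]
      intro y hy
      rw [Set.mem_Ioi] at hy
      rcases le_total shat y with hle | hle
      · have hmono : MonotoneOn F (Set.Ici shat) := by
          apply monotoneOn_of_deriv_nonneg (convex_Ici shat)
            (hcont _ fun x hx => lt_of_lt_of_le hshat hx)
          · rw [interior_Ici]
            exact fun x hx =>
              ((hF x (lt_trans hshat hx)).differentiableAt).differentiableWithinAt
          · rw [interior_Ici]
            intro x hx
            rw [hderiv x (lt_trans hshat hx)]
            have := hDmono shat x hshat (le_of_lt hx)
            linarith
        exact hmono Set.self_mem_Ici hle hle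
      · have hanti : AntitoneOn F (Set.Icc y shat) := by
          apply antitoneOn_of_deriv_nonpos (convex_Icc y shat)
            (hcont _ fun x hx => lt_of_lt_of_le hy hx.1)
          · rw [interior_Icc]
            exact fun x hx =>
              ((hF x (lt_trans hy hx.1)).differentiableAt).differentiableWithinAt
          · rw [interior_Icc]
            intro x hx
            rw [hderiv x (lt_trans hy hx.1)]
            have := hDmono x shat (lt_trans hy hx.1) (le_of_lt hx.2)
            linarith
        exact hanti ⟨le_rfl, hle⟩ ⟨hle, le_rfl⟩ hle
end

section
/- Let c > 0 and let Z be a standard normal random variable (law N(0,1) on ℝ). Then E[χ_c(Z)] = (c²/2)·(1 − F_{χ²₁}(c²)) + (1/2)·F_{χ²₃}(c²), where F_{χ²ₖ} denotes the cumulative distribution function of the chi-squared distribution with k degrees of freedom, i.e., of the Gamma distribution with shape k/2 and rate 1/2. -/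
open MeasureTheory ProbabilityTheory

/-- The CDF of the chi-squared distribution with `k` degrees of freedom, i.e. of the
Gamma distribution with shape `k/2` and rate `1/2`. -/
noncomputable def chiSqCDF (k : ℕ) : ℝ → ℝ :=
  fun x => cdf (gammaMeasure ((k : ℝ) / 2) (1 / 2)) x

open Set Real

section Aux

lemma gammaCDF_pos_eq_Ioc {a r y : ℝ} (ha : 0 < a) (ha1 : a ≠ 1) (hr : 0 < r) :
    cdf (gammaMeasure a r) y = ∫ x in Set.Ioc 0 y, gammaPDFReal a r x := by
  rw [cdf_gammaMeasure_eq_integral ha hr,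
    ← integral_indicator measurableSet_Iic, ← integral_indicator measurableSet_Ioc]
  congr 1
  ext x
  by_cases hx : x ∈ Set.Ioc 0 y
  · rw [Set.indicator_of_mem hx, Set.indicator_of_mem (Set.mem_Iic.2 hx.2)]
  · by_cases hx' : x ∈ Set.Iic y
    · rw [Set.indicator_of_mem hx', Set.indicator_of_notMem hx]
      have hx0 : x ≤ 0 := by
        by_contra h
        exact hx ⟨lt_of_not_ge h, hx'⟩
      rcases lt_or_eq_of_le hx0 with h | h
      · simp [gammaPDFReal, not_le.2 h]
      · subst h
        simp [gammaPDFReal, Real.zero_rpow (sub_ne_zero.2 ha1)]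
    · rw [Set.indicator_of_notMem hx, Set.indicator_of_notMem hx']

lemma sq_image_Ioc {c : ℝ} (hc : 0 < c) :
    (fun t : ℝ => t ^ 2) '' Set.Ioc 0 c = Set.Ioc 0 (c ^ 2) := by
  ext y
  constructor
  · rintro ⟨t, ⟨ht0, htc⟩, rfl⟩
    exact ⟨by positivity, pow_le_pow_left₀ ht0.le htc 2⟩
  · rintro ⟨hy0, hyc⟩
    exact ⟨Real.sqrt y, ⟨Real.sqrt_pos.2 hy0, by
      calc Real.sqrt y ≤ Real.sqrt (c ^ 2) := Real.sqrt_le_sqrt hyc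
        _ = c := Real.sqrt_sq hc.le⟩, Real.sq_sqrt hy0.le⟩

lemma integral_Ioc_sq {c : ℝ} (hc : 0 < c) (g : ℝ → ℝ) :
    ∫ x in Set.Ioc 0 (c ^ 2), g x = ∫ t in Set.Ioc 0 c, |2 * t| * g (t ^ 2) := by
  rw [← sq_image_Ioc hc]
  have := integral_image_eq_integral_abs_deriv_smul (f := fun t : ℝ => t ^ 2)
    (f' := fun t => 2 * t) (s := Set.Ioc (0:ℝ) c) measurableSet_Ioc
    (fun x _ => by simpa using (hasDerivAt_pow 2 x).hasDerivWithinAt)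
    (fun a ha b hb h => by
      simp only at h
      have := congrArg Real.sqrt h
      rwa [Real.sqrt_sq ha.1.le, Real.sqrt_sq hb.1.le] at this) g
  simpa [smul_eq_mul] using this

lemma key1 {t : ℝ} (ht : 0 < t) :
    |2 * t| * gammaPDFReal (1 / 2) (1 / 2) (t ^ 2) = 2 * gaussianPDFReal 0 1 t := by
  have hsq2 : (0:ℝ) < Real.sqrt 2 := Real.sqrt_pos.2 two_pos
  have hsqpi : (0:ℝ) < Real.sqrt π := Real.sqrt_pos.2 pi_pos
  rw [gammaPDFReal, if_pos (sq_nonneg t), abs_of_pos (by positivity : (0:ℝ) < 2 * t)]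
  have h1 : ((1:ℝ)/2) ^ ((1:ℝ)/2) = (Real.sqrt 2)⁻¹ := by
    rw [← Real.sqrt_eq_rpow, one_div, Real.sqrt_inv]
  have h2 : (t ^ 2) ^ ((1:ℝ)/2 - 1) = t⁻¹ := by
    rw [← Real.rpow_natCast t 2, ← Real.rpow_mul ht.le]
    norm_num
    rw [Real.rpow_neg_one]
  have h3 : Real.Gamma (1/2) = Real.sqrt π := Real.Gamma_one_half_eq
  rw [h1, h2, h3, gaussianPDFReal]
  have h4 : Real.sqrt (2 * π * (1:NNReal)) = Real.sqrt 2 * Real.sqrt π := by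
    push_cast
    rw [mul_one, Real.sqrt_mul two_pos.le]
  rw [h4]
  have h5 : Real.exp (-(1 / 2 * t ^ 2)) = Real.exp (-(t - 0) ^ 2 / (2 * (1:NNReal))) := by
    congr 1
    push_cast
    ring
  rw [h5]
  field_simp

lemma Gamma_three_half : Real.Gamma (3/2) = Real.sqrt π / 2 := by
  have : (3/2 : ℝ) = 1/2 + 1 := by norm_num
  rw [this, Real.Gamma_add_one (by norm_num), Real.Gamma_one_half_eq]
  ring

lemma key3 {t : ℝ} (ht : 0 < t) :
    |2 * t| * gammaPDFReal (3 / 2) (1 / 2) (t ^ 2) = 2 * (t ^ 2 * gaussianPDFReal 0 1 t) := by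
  have hsq2 : (0:ℝ) < Real.sqrt 2 := Real.sqrt_pos.2 two_pos
  have hsqpi : (0:ℝ) < Real.sqrt π := Real.sqrt_pos.2 pi_pos
  have h22 : Real.sqrt 2 * Real.sqrt 2 = 2 := Real.mul_self_sqrt two_pos.le
  rw [gammaPDFReal, if_pos (sq_nonneg t), abs_of_pos (by positivity : (0:ℝ) < 2 * t)]
  have h1 : ((1:ℝ)/2) ^ ((3:ℝ)/2) = (2 * Real.sqrt 2)⁻¹ := by
    rw [one_div, Real.inv_rpow two_pos.le]
    congr 1
    rw [show (3/2:ℝ) = 1 + 1/2 by norm_num, Real.rpow_add two_pos, Real.rpow_one,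
      ← Real.sqrt_eq_rpow]
  have h2 : (t ^ 2) ^ ((3:ℝ)/2 - 1) = t := by
    rw [← Real.rpow_natCast t 2, ← Real.rpow_mul ht.le]
    norm_num
  rw [h1, h2, Gamma_three_half, gaussianPDFReal]
  have h4 : Real.sqrt (2 * π * (1:NNReal)) = Real.sqrt 2 * Real.sqrt π := by
    push_cast
    rw [mul_one, Real.sqrt_mul two_pos.le]
  rw [h4]
  have h5 : Real.exp (-(1 / 2 * t ^ 2)) = Real.exp (-(t - 0) ^ 2 / (2 * (1:NNReal))) := by
    congr 1
    push_cast
    ring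
  rw [h5]
  field_simp

lemma chiSq_one_eq {c : ℝ} (hc : 0 < c) :
    chiSqCDF 1 (c ^ 2) = ∫ t in Set.Ioc 0 c, 2 * gaussianPDFReal 0 1 t := by
  have h : chiSqCDF 1 (c ^ 2) = cdf (gammaMeasure (1/2) (1/2)) (c ^ 2) := by
    norm_num [chiSqCDF]
  rw [h, gammaCDF_pos_eq_Ioc (by norm_num) (by norm_num) (by norm_num),
    integral_Ioc_sq hc]
  apply setIntegral_congr_fun measurableSet_Ioc
  intro t ht
  exact key1 ht.1

lemma chiSq_three_eq {c : ℝ} (hc : 0 < c) :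
    chiSqCDF 3 (c ^ 2) = ∫ t in Set.Ioc 0 c, 2 * (t ^ 2 * gaussianPDFReal 0 1 t) := by
  have h : chiSqCDF 3 (c ^ 2) = cdf (gammaMeasure (3/2) (1/2)) (c ^ 2) := by
    norm_num [chiSqCDF]
  rw [h, gammaCDF_pos_eq_Ioc (by norm_num) (by norm_num) (by norm_num),
    integral_Ioc_sq hc]
  apply setIntegral_congr_fun measurableSet_Ioc
  intro t ht
  exact key3 ht.1

lemma huberChi_eq {c : ℝ} (hc : 0 < c) (x : ℝ) :
    huberChi c x = c ^ 2 / 2 - (Set.Icc (-c) c).indicator (fun y => (c ^ 2 - y ^ 2) / 2) x := by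
  unfold huberChi huberScore huberLoss
  by_cases h : |x| ≤ c
  · rw [if_pos h, if_pos h, Set.indicator_of_mem (Set.mem_Icc.mpr (abs_le.mp h))]
    ring
  · rw [if_neg h, if_neg h,
      Set.indicator_of_notMem (fun hx => h (abs_le.mpr (Set.mem_Icc.mp hx)))]
    have hx0 : x ≠ 0 := by
      intro h0
      rw [h0] at h
      simp at h
      linarith
    have hsgn : Real.sign x * x = |x| := by
      rcases hx0.lt_or_gt with h' | h'
      · rw [Real.sign_of_neg h', abs_of_neg h']; ring
      · rw [Real.sign_of_pos h', abs_of_pos h']; ring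
    have : c * Real.sign x * x = c * |x| := by rw [mul_assoc, hsgn]
    rw [this]; ring

lemma gaussian_continuous : Continuous (gaussianPDFReal 0 1) := by
  unfold gaussianPDFReal
  fun_prop

lemma integral_huber_main {c : ℝ} (hc : 0 < c) :
    ∫ x, huberChi c x ∂(gaussianReal 0 1) =
      c ^ 2 / 2 - 2 * ∫ x in Set.Ioc 0 c,
        gaussianPDFReal 0 1 x * ((c ^ 2 - x ^ 2) / 2) := by
  set φ := gaussianPDFReal 0 1 with hφ
  set f : ℝ → ℝ := (Set.Icc (-c) c).indicator (fun y => (c ^ 2 - y ^ 2) / 2) with hf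
  have hmeas : Measurable f :=
    (measurable_const.sub (measurable_id.pow_const 2)).div_const 2 |>.indicator measurableSet_Icc
  have hbound : ∀ x, ‖f x‖ ≤ c ^ 2 / 2 := by
    intro x
    by_cases hx : x ∈ Set.Icc (-c) c
    · rw [hf, Set.indicator_of_mem hx]
      have hx2 : x ^ 2 ≤ c ^ 2 := by
        rw [Set.mem_Icc, ← abs_le] at hx
        calc x ^ 2 = |x| ^ 2 := (sq_abs x).symm
          _ ≤ c ^ 2 := pow_le_pow_left₀ (abs_nonneg x) hx 2
      rw [Real.norm_eq_abs, abs_div, abs_of_nonneg (by linarith : (0:ℝ) ≤ c ^ 2 - x ^ 2)]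
      simp only [abs_two]
      · nlinarith [sq_nonneg x]
    · rw [hf, Set.indicator_of_notMem hx]
      simp
      positivity
  have hint : Integrable f (gaussianReal 0 1) :=
    ⟨hmeas.aestronglyMeasurable, HasFiniteIntegral.of_bounded (ae_of_all _ hbound)⟩
  have step1 : ∫ x, huberChi c x ∂(gaussianReal 0 1)
      = c ^ 2 / 2 - ∫ x, f x ∂(gaussianReal 0 1) := by
    have : ∫ x, huberChi c x ∂(gaussianReal 0 1)
        = ∫ x, (c ^ 2 / 2 - f x) ∂(gaussianReal 0 1) := by
      congr 1; funext x; exact huberChi_eq hc x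
    rw [this, integral_sub (integrable_const _) hint, integral_const]
    simp
  rw [step1, hf, integral_indicator measurableSet_Icc]
  have hden : gaussianReal 0 1 = volume.withDensity (fun x => ((φ x).toNNReal : ENNReal)) :=
    gaussianReal_of_var_ne_zero 0 one_ne_zero
  rw [hden, setIntegral_withDensity_eq_setIntegral_smul
    (by exact measurable_real_toNNReal.comp (measurable_gaussianPDFReal 0 1) :
      Measurable fun x => (φ x).toNNReal) _ measurableSet_Icc]
  have congr1 : ∫ x in Set.Icc (-c) c, (φ x).toNNReal • ((c ^ 2 - x ^ 2) / 2)
      = ∫ x in Set.Icc (-c) c, φ x * ((c ^ 2 - x ^ 2) / 2) := by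
    apply setIntegral_congr_fun measurableSet_Icc
    intro x _
    simp [NNReal.smul_def, Real.coe_toNNReal _ (gaussianPDFReal_nonneg 0 1 x)]
    exact Or.inl (gaussianPDFReal_nonneg 0 1 x)
  rw [congr1, integral_Icc_eq_integral_Ioc,
    ← intervalIntegral.integral_of_le (by linarith : -c ≤ c)]
  set h : ℝ → ℝ := fun x => φ x * ((c ^ 2 - x ^ 2) / 2) with hh
  have hcont : Continuous h := by
    apply gaussian_continuous.mul
    fun_prop
  have hsplit : ∫ x in (-c)..c, h x = (∫ x in (-c)..(0:ℝ), h x) + ∫ x in (0:ℝ)..c, h x :=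
    (intervalIntegral.integral_add_adjacent_intervals
      (hcont.intervalIntegrable _ _) (hcont.intervalIntegrable _ _)).symm
  have heven : ∀ x, h (-x) = h x := by
    intro x
    simp only [hh, hφ, gaussianPDFReal]
    ring_nf
  have hneg : ∫ x in (-c)..(0:ℝ), h x = ∫ x in (0:ℝ)..c, h x := by
    have := intervalIntegral.integral_comp_neg (a := (0:ℝ)) (b := c) (f := h)
    simp only [neg_zero] at this
    rw [← this]
    apply intervalIntegral.integral_congr
    intro x _
    exact heven x
  rw [hsplit, hneg, intervalIntegral.integral_of_le hc.le]
  ring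

end Aux

/-- For a standard normal `Z`, `E[χ_c(Z)] = (c²/2)(1 − F_{χ²₁}(c²)) + (1/2)F_{χ²₃}(c²)`. -/
theorem integral_huberChi_gaussian (c : ℝ) (hc : 0 < c) :
    ∫ x, huberChi c x ∂(gaussianReal 0 1) =
      c ^ 2 / 2 * (1 - chiSqCDF 1 (c ^ 2)) + 1 / 2 * chiSqCDF 3 (c ^ 2) := by
  rw [integral_huber_main hc, chiSq_one_eq hc, chiSq_three_eq hc]
  have i1 : IntegrableOn (fun t : ℝ => 2 * gaussianPDFReal 0 1 t) (Set.Ioc 0 c) volume :=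
    (continuous_const.mul gaussian_continuous).integrableOn_Ioc
  have i3 : IntegrableOn (fun t : ℝ => 2 * (t ^ 2 * gaussianPDFReal 0 1 t))
      (Set.Ioc 0 c) volume :=
    (continuous_const.mul ((continuous_pow 2).mul gaussian_continuous)).integrableOn_Ioc
  have key : ∫ x in Set.Ioc 0 c, gaussianPDFReal 0 1 x * ((c ^ 2 - x ^ 2) / 2)
      = c ^ 2 / 4 * (∫ t in Set.Ioc 0 c, 2 * gaussianPDFReal 0 1 t)
        - 1 / 4 * (∫ t in Set.Ioc 0 c, 2 * (t ^ 2 * gaussianPDFReal 0 1 t)) := by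
    rw [← integral_const_mul, ← integral_const_mul,
      ← integral_sub (i1.const_mul _) (i3.const_mul _)]
    apply setIntegral_congr_fun measurableSet_Ioc
    intro x _
    ring
  rw [key]
  ring
end

section
/- For every threshold c > 0 and all x, u ∈ ℝ, the Huber loss admits the quadratic majorization ρ_c(u) ≤ ρ_c(x) + ψ_c(x)·(u − x) + (1/2)·(u − x)², with equality when u = x. -/
/-- Quadratic majorization of the Huber loss:
`ρ_c(u) ≤ ρ_c(x) + ψ_c(x)(u − x) + (u − x)²/2`, with equality at `u = x`. -/
theorem huberLoss_quadratic_majorization (c : ℝ) (hc : 0 < c) :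
    (∀ x u : ℝ,
      huberLoss c u ≤
        huberLoss c x + huberScore c x * (u - x) + 1 / 2 * (u - x) ^ 2) ∧
    (∀ x : ℝ,
      huberLoss c x =
        huberLoss c x + huberScore c x * (x - x) + 1 / 2 * (x - x) ^ 2) := by
  constructor
  · intro x u
    rcases le_or_gt |x| c with hx | hx
    · have hLx : huberLoss c x = x ^ 2 / 2 := if_pos hx
      have hSx : huberScore c x = x := if_pos hx
      rw [hLx, hSx]
      have hRu : huberLoss c u ≤ u ^ 2 / 2 := by
        unfold huberLoss
        split_ifs with hu
        · exact le_refl _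
        · rcases abs_cases u with ⟨h, _⟩ | ⟨h, _⟩ <;> rw [h] <;>
            nlinarith [sq_nonneg (u - c), sq_nonneg (u + c)]
      nlinarith [hRu]
    · have hxn : ¬ |x| ≤ c := not_le.mpr hx
      have hLx : huberLoss c x = c * |x| - c ^ 2 / 2 := if_neg hxn
      have hSx : huberScore c x = c * Real.sign x := if_neg hxn
      rw [hLx, hSx]
      rcases abs_cases x with ⟨hax, hx0⟩ | ⟨hax, hx0⟩
      · -- x ≥ 0, so x > c > 0
        have hxc : c < x := by rw [hax] at hx; exact hx
        have hxpos : 0 < x := lt_trans hc hxc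
        rw [hax, Real.sign_of_pos hxpos]
        unfold huberLoss
        split_ifs with hu
        · have h1 : u ≤ c := le_trans (le_abs_self u) hu
          nlinarith [mul_nonneg (sub_nonneg.mpr hxc.le) (by linarith : (0:ℝ) ≤ x + c - 2*u)]
        · push_neg at hu
          rcases abs_cases u with ⟨h, _⟩ | ⟨h, hu0⟩ <;> rw [h]
          · nlinarith [sq_nonneg (u - x)]
          · nlinarith [sq_nonneg (u + c),
              mul_nonneg (sub_nonneg.mpr hxc.le) (by linarith : (0:ℝ) ≤ -u)]
      · -- x < 0, so x < -c
        have hxc : x < -c := by rw [hax] at hx; linarith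
        have hxneg : x < 0 := by linarith
        rw [hax, Real.sign_of_neg hxneg]
        unfold huberLoss
        split_ifs with hu
        · have h1 : -c ≤ u := neg_le_of_abs_le hu
          nlinarith [mul_nonneg (by linarith : (0:ℝ) ≤ -c - x)
            (by linarith : (0:ℝ) ≤ 2*u - x + c)]
        · push_neg at hu
          rcases abs_cases u with ⟨h, hu0⟩ | ⟨h, _⟩ <;> rw [h]
          · nlinarith [sq_nonneg (u - c),
              mul_nonneg (by linarith : (0:ℝ) ≤ -c - x) (by linarith : (0:ℝ) ≤ u)]
          · nlinarith [sq_nonneg (u - x)]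
  · intro x
    ring
end

section
/- For every threshold c > 0, every r ∈ ℝ and all σ, σ' > 0, the scale surrogate majorization holds: ρ_c(r/σ)·σ ≤ ρ_c(r/σ')·σ' + χ_c(r/σ')·((σ')²/σ − σ'), with equality when σ = σ'. -/
/-- Scale surrogate majorization:
`ρ_c(r/σ)·σ ≤ ρ_c(r/σ')·σ' + χ_c(r/σ')·((σ')²/σ − σ')`, with equality at `σ = σ'`. -/
theorem huberLoss_scale_majorization (c : ℝ) (hc : 0 < c) (r : ℝ) :
    (∀ σ σ' : ℝ, 0 < σ → 0 < σ' →
      huberLoss c (r / σ) * σ ≤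
        huberLoss c (r / σ') * σ' + huberChi c (r / σ') * (σ' ^ 2 / σ - σ')) ∧
    (∀ σ' : ℝ, 0 < σ' →
      huberLoss c (r / σ') * σ' =
        huberLoss c (r / σ') * σ' + huberChi c (r / σ') * (σ' ^ 2 / σ' - σ')) := by
  constructor
  · intro σ σ' hσ hσ'
    have hσne : σ ≠ 0 := ne_of_gt hσ
    have hσ'ne : σ' ≠ 0 := ne_of_gt hσ'
    have habs : |r / σ| = |r| / σ := by rw [abs_div, abs_of_pos hσ]
    have habs' : |r / σ'| = |r| / σ' := by rw [abs_div, abs_of_pos hσ']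
    have ha : (0:ℝ) ≤ |r| := abs_nonneg r
    have hsq : r ^ 2 = |r| ^ 2 := (sq_abs r).symm
    unfold huberChi huberScore huberLoss
    by_cases h1 : |r / σ| ≤ c <;> by_cases h2 : |r / σ'| ≤ c
    · simp only [if_pos h1, if_pos h2]
      apply le_of_eq
      field_simp
      ring
    · simp only [if_pos h1, if_neg h2]
      have hv : r / σ' ≠ 0 := by
        intro h
        rw [h, abs_zero] at h2
        exact h2 hc.le
      have hsgn : Real.sign (r / σ') * (r / σ') = |r / σ'| := by
        rcases hv.lt_or_gt with h | h
        · rw [Real.sign_of_neg h, abs_of_neg h]; ring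
        · rw [Real.sign_of_pos h, abs_of_pos h]; ring
      rw [mul_assoc, hsgn, habs']
      rw [habs] at h1
      rw [habs'] at h2
      push_neg at h2
      have h1' : |r| ≤ c * σ := by
        rw [div_le_iff₀ hσ] at h1; linarith
      have h2' : c * σ' < |r| := by
        rw [lt_div_iff₀ hσ'] at h2; linarith
      have key : (0:ℝ) ≤ (|r| - c * σ') * (c * (2 * σ - σ') - |r|) := by
        apply mul_nonneg
        · linarith
        · nlinarith
      field_simp
      rw [hsq]
      nlinarith [mul_nonneg (show (0:ℝ) ≤ 4*σ^2*σ'^3 by positivity) key,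
        mul_nonneg (show (0:ℝ) ≤ σ*σ'^3 by positivity) key,
        mul_nonneg (show (0:ℝ) ≤ σ^2*σ' by positivity) key,
        mul_nonneg (show (0:ℝ) ≤ σ*σ' by positivity) key]
    · simp only [if_neg h1, if_pos h2]
      rw [habs, show r / σ' * (r / σ') - (r / σ') ^ 2 / 2 = (r / σ') ^ 2 / 2 from by ring]
      rw [habs] at h1
      push_neg at h1
      rw [habs'] at h2
      have h1' : c * σ < |r| := by
        rw [lt_div_iff₀ hσ] at h1; linarith
      have h2' : |r| ≤ c * σ' := by
        rw [div_le_iff₀ hσ'] at h2; linarith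
      field_simp
      rw [hsq]
      nlinarith [mul_nonneg (show (0:ℝ) ≤ 4*σ*σ'^4 by positivity) (sq_nonneg (|r| - c * σ)),
        mul_nonneg (show (0:ℝ) ≤ 2*σ*σ'^4 by positivity) (sq_nonneg (|r| - c * σ)),
        mul_nonneg (show (0:ℝ) ≤ σ*σ'^4 by positivity) (sq_nonneg (|r| - c * σ)),
        mul_nonneg (show (0:ℝ) ≤ 8*σ*σ'^4 by positivity) (sq_nonneg (|r| - c * σ))]
    · simp only [if_neg h1, if_neg h2]
      have hv : r / σ' ≠ 0 := by
        intro h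
        rw [h, abs_zero] at h2
        exact h2 hc.le
      have hsgn : Real.sign (r / σ') * (r / σ') = |r / σ'| := by
        rcases hv.lt_or_gt with h | h
        · rw [Real.sign_of_neg h, abs_of_neg h]; ring
        · rw [Real.sign_of_pos h, abs_of_pos h]; ring
      rw [mul_assoc, hsgn, habs, habs']
      field_simp
      nlinarith [mul_nonneg (show (0:ℝ) ≤ 4*σ*σ'^3*c^2 by positivity) (sq_nonneg (σ - σ')),
        mul_nonneg (show (0:ℝ) ≤ σ*σ'*c^2 by positivity) (sq_nonneg (σ - σ')),
        mul_nonneg (show (0:ℝ) ≤ σ*σ'^2*c^2 by positivity) (sq_nonneg (σ - σ')),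
        mul_nonneg (show (0:ℝ) ≤ 2*σ*σ'^2*c^2 by positivity) (sq_nonneg (σ - σ'))]
  · intro σ' hσ'
    have h0 : σ' ^ 2 / σ' - σ' = 0 := by field_simp; ring
    rw [h0, mul_zero, add_zero]
end

section
/- (Theorem 1, regression update) Let c > 0, σ > 0, y ∈ ℝ^N, X ∈ ℝ^{N×p} with XᵀX invertible, and β' ∈ ℝ^p. Set r' = y − Xβ' and the pseudo-residual r'_ψ = ψ_c(r'/σ)·σ (entrywise). Then the quadratic surrogate g₁(β) = Σ_{i=1}^N ( (r'_{ψ,i} − r'_i)·r_i + (1/2)·r_i² ) / σ, where r = y − Xβ, has the unique global minimizer β* = β' + (XᵀX)⁻¹Xᵀ r'_ψ over β ∈ ℝ^p. -/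
/-- (Theorem 1, regression update) The quadratic surrogate
`g₁(β) = Σᵢ ((r'_{ψ,i} − r'ᵢ)·rᵢ + (1/2)rᵢ²)/σ`, with `r = y − Xβ`, has the unique
global minimizer `β* = β' + (XᵀX)⁻¹Xᵀ r'_ψ`, where `r' = y − Xβ'` and
`r'_ψ = ψ_c(r'/σ)·σ` entrywise. -/
theorem huberRegressionSurrogate_unique_minimizer (c σ : ℝ) (hc : 0 < c) (hσ : 0 < σ)
    (N p : ℕ) (y : Fin N → ℝ) (X : Matrix (Fin N) (Fin p) ℝ)
    (hX : IsUnit (X.transpose * X).det) (β' : Fin p → ℝ) :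
    let r' : Fin N → ℝ := y - X.mulVec β'
    let rψ' : Fin N → ℝ := fun i => huberScore c (r' i / σ) * σ
    let g₁ : (Fin p → ℝ) → ℝ := fun β =>
      ∑ i, ((rψ' i - r' i) * (y i - X.mulVec β i) + 1 / 2 * (y i - X.mulVec β i) ^ 2) / σ
    let βstar : Fin p → ℝ := β' + (X.transpose * X)⁻¹.mulVec (X.transpose.mulVec rψ')
    IsMinOn g₁ Set.univ βstar ∧ ∀ β : Fin p → ℝ, IsMinOn g₁ Set.univ β → β = βstar := by
  intro r' rψ' g₁ βstar
  have hr' : r' = y - X.mulVec β' := rfl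
  have hg : ∀ β, g₁ β = ∑ i, ((rψ' i - r' i) * (y i - X.mulVec β i)
      + 1 / 2 * (y i - X.mulVec β i) ^ 2) / σ := fun _ => rfl
  set w : Fin p → ℝ := (X.transpose * X)⁻¹.mulVec (X.transpose.mulVec rψ') with hw
  have hβstar : βstar = β' + w := rfl
  have hinv' : (X.transpose * X) * (X.transpose * X)⁻¹ = 1 := Matrix.mul_nonsing_inv _ hX
  have hinv : (X.transpose * X)⁻¹ * (X.transpose * X) = 1 := Matrix.nonsing_inv_mul _ hX
  set d : Fin N → ℝ := rψ' - X.mulVec w with hd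
  have hXd : X.transpose.mulVec d = 0 := by
    rw [hd, hw, Matrix.mulVec_sub, Matrix.mulVec_mulVec, Matrix.mulVec_mulVec, hinv',
      Matrix.one_mulVec, sub_self]
  have hinj : ∀ v : Fin p → ℝ, X.mulVec v = 0 → v = 0 := by
    intro v hv
    have h2 : (X.transpose * X).mulVec v = 0 := by
      rw [← Matrix.mulVec_mulVec, hv, Matrix.mulVec_zero]
    calc v = ((X.transpose * X)⁻¹ * (X.transpose * X)).mulVec v := by
            rw [hinv, Matrix.one_mulVec]
      _ = (X.transpose * X)⁻¹.mulVec ((X.transpose * X).mulVec v) :=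
            (Matrix.mulVec_mulVec _ _ _).symm
      _ = 0 := by rw [h2, Matrix.mulVec_zero]
  have hdi : ∀ i, d i = (rψ' i - r' i) + (y i - X.mulVec βstar i) := by
    intro i
    have h1 : X.mulVec βstar i = X.mulVec β' i + X.mulVec w i := by
      rw [hβstar, Matrix.mulVec_add]; rfl
    have h2 : r' i = y i - X.mulVec β' i := rfl
    have h3 : d i = rψ' i - X.mulVec w i := rfl
    rw [h3, h1, h2]; ring
  have hkey : ∀ β, g₁ β = g₁ βstar
      + (∑ i, (X.mulVec β i - X.mulVec βstar i) ^ 2) / (2 * σ) := by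
    intro β
    have hsum0 : ∑ i, (X.mulVec β i - X.mulVec βstar i) * d i = 0 := by
      have h1 : ∑ i, (X.mulVec β i - X.mulVec βstar i) * d i
          = dotProduct (X.mulVec (β - βstar)) d := by
        rw [Matrix.mulVec_sub]; rfl
      rw [h1, dotProduct_comm, Matrix.dotProduct_mulVec, ← Matrix.mulVec_transpose,
        hXd, zero_dotProduct]
    have e : ∀ i ∈ Finset.univ, ((rψ' i - r' i) * (y i - X.mulVec β i)
        + 1 / 2 * (y i - X.mulVec β i) ^ 2) / σ
        = ((rψ' i - r' i) * (y i - X.mulVec βstar i)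
          + 1 / 2 * (y i - X.mulVec βstar i) ^ 2) / σ
          + (-((X.mulVec β i - X.mulVec βstar i) * d i)) / σ
          + (X.mulVec β i - X.mulVec βstar i) ^ 2 / (2 * σ) := by
      intro i _
      rw [hdi i]
      field_simp
      ring
    rw [hg, hg, Finset.sum_congr rfl e, Finset.sum_add_distrib, Finset.sum_add_distrib,
      ← Finset.sum_div, ← Finset.sum_div, ← Finset.sum_div]
    have hneg : ∑ i, -((X.mulVec β i - X.mulVec βstar i) * d i) = 0 := by
      rw [Finset.sum_neg_distrib, hsum0, neg_zero]
    rw [hneg]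
    ring
  have hmin : IsMinOn g₁ Set.univ βstar := by
    intro β _
    rw [Set.mem_setOf_eq, hkey β]
    have hnn : 0 ≤ ∑ i, (X.mulVec β i - X.mulVec βstar i) ^ 2 :=
      Finset.sum_nonneg fun i _ => sq_nonneg _
    have : 0 ≤ (∑ i, (X.mulVec β i - X.mulVec βstar i) ^ 2) / (2 * σ) :=
      div_nonneg hnn (by linarith)
    linarith
  refine ⟨hmin, fun β hβ => ?_⟩
  have h1 : g₁ β ≤ g₁ βstar := hβ (Set.mem_univ βstar)
  have h2 := hkey β
  have hnn : 0 ≤ ∑ i, (X.mulVec β i - X.mulVec βstar i) ^ 2 :=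
    Finset.sum_nonneg fun i _ => sq_nonneg _
  have hS : ∑ i, (X.mulVec β i - X.mulVec βstar i) ^ 2 = 0 := by
    by_contra hne
    have hpos : 0 < ∑ i, (X.mulVec β i - X.mulVec βstar i) ^ 2 :=
      lt_of_le_of_ne hnn (Ne.symm hne)
    have : 0 < (∑ i, (X.mulVec β i - X.mulVec βstar i) ^ 2) / (2 * σ) :=
      div_pos hpos (by linarith)
    linarith
  have hzero : X.mulVec (β - βstar) = 0 := by
    funext i
    have := (Finset.sum_eq_zero_iff_of_nonneg (fun i _ => sq_nonneg
      (X.mulVec β i - X.mulVec βstar i))).mp hS i (Finset.mem_univ i)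
    have h3 : X.mulVec β i - X.mulVec βstar i = 0 := by
      exact pow_eq_zero_iff (by norm_num) |>.mp this
    rw [Matrix.mulVec_sub]
    simpa using h3
  have := hinj _ hzero
  exact sub_eq_zero.mp this
end
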